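/- Let M be a finite-horizon MDP with reward r and M' an MDP with the same transitions and reward r' ≤ r. Let π* be optimal for M and π' be optimal (greedy) for M'. Then the suboptimality satisfies V₀* − V₀^{π'} ≤ V₀* − V'₀* = Σ_{h=1}^H E_{π*}[rₕ(sₕ,aₕ) − r'ₕ(sₕ,aₕ)], i.e., the suboptimality of the pessimistically learned policy is bounded by the expected total deficit along trajectories of the optimal policy. -/

import Mathlib

/-- `val P r π n h s` : expected cumulative reward of running deterministic policy `π`
for `n` steps starting at time `h` in state `s`; `Vₕ^π(s) = val P r π (H + 1 - h) h s`. -/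
noncomputable def val {S A : Type} [Fintype S]
    (P : ℕ → S → A → S → ℝ) (r : ℕ → S → A → ℝ) (π : ℕ → S → A) :
    ℕ → ℕ → S → ℝ
  | 0, _, _ => 0
  | n + 1, h, s => r h s (π h s) + ∑ s', P h s (π h s) s' * val P r π n (h + 1) s'

/-- `occ P π p₀ (h-1) s` is the probability `d_h^π(s)` of being in state `s` at time
step `h` when running `π` from initial distribution `p₀`. -/
noncomputable def occ {S A : Type} [Fintype S]
    (P : ℕ → S → A → S → ℝ) (π : ℕ → S → A) (p₀ : S → ℝ) : ℕ → S → ℝ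
  | 0, s => p₀ s
  | n + 1, s' => ∑ s, occ P π p₀ n s * P (n + 1) s (π (n + 1) s) s'

lemma val_mono {S A : Type} [Fintype S]
    (P : ℕ → S → A → S → ℝ) (hP0 : ∀ h s a s', 0 ≤ P h s a s')
    (r r' : ℕ → S → A → ℝ) (hr : ∀ h s a, r' h s a ≤ r h s a)
    (π : ℕ → S → A) : ∀ n h s, val P r' π n h s ≤ val P r π n h s := by
  intro n
  induction n with
  | zero => intro h s; simp [val]
  | succ n ih =>
    intro h s
    simp only [val]
    gcongr with s' _
    · exact hr _ _ _
    · exact hP0 _ _ _ _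
    · exact ih _ _

lemma val_occ {S A : Type} [Fintype S]
    (P : ℕ → S → A → S → ℝ) (r : ℕ → S → A → ℝ) (π : ℕ → S → A) (p₀ : S → ℝ) :
    ∀ n m, ∑ s, occ P π p₀ m s * val P r π n (m + 1) s
      = ∑ h ∈ Finset.Icc (m + 1) (m + n), ∑ s, occ P π p₀ (h - 1) s * r h s (π h s) := by
  intro n
  induction n with
  | zero => intro m; simp [val]
  | succ n ih =>
    intro m
    simp only [val, mul_add, Finset.sum_add_distrib, Finset.mul_sum]
    have swap : ∑ s, ∑ s', occ P π p₀ m s * (P (m + 1) s (π (m + 1) s) s' * val P r π n (m + 1 + 1) s')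
        = ∑ s', occ P π p₀ (m + 1) s' * val P r π n (m + 2) s' := by
      rw [Finset.sum_comm]
      refine Finset.sum_congr rfl fun s' _ => ?_
      show _ = occ P π p₀ (m + 1) s' * _
      simp only [occ, Finset.sum_mul]
      ring_nf
      exact Finset.sum_congr rfl fun x _ => by ring
    rw [swap, ih (m + 1)]
    have hsplit : Finset.Icc (m + 1) (m + (n + 1)) = insert (m + 1) (Finset.Icc (m + 1 + 1) (m + 1 + n)) := by
      ext x; simp [Finset.mem_Icc]; omega
    rw [hsplit, Finset.sum_insert (by simp)]
    simp


theorem stmt_9 {S A : Type} [Fintype S] (H : ℕ)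
    (P : ℕ → S → A → S → ℝ) (hP0 : ∀ h s a s', 0 ≤ P h s a s')
    (hP1 : ∀ h s a, ∑ s', P h s a s' = 1)
    (p₀ : S → ℝ) (hp₀ : ∀ s, 0 ≤ p₀ s) (hp₀1 : ∑ s, p₀ s = 1)
    (r r' : ℕ → S → A → ℝ) (hr : ∀ h s a, r' h s a ≤ r h s a)
    (πstar πpes : ℕ → S → A)
    (hopt : ∀ (π : ℕ → S → A) n h s, val P r π n h s ≤ val P r πstar n h s)
    (hopt' : ∀ (π : ℕ → S → A) n h s, val P r' π n h s ≤ val P r' πpes n h s) :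
    (∑ s, p₀ s * val P r πstar H 1 s) - (∑ s, p₀ s * val P r πpes H 1 s)
      ≤ (∑ s, p₀ s * val P r πstar H 1 s) - (∑ s, p₀ s * val P r' πpes H 1 s) ∧
    (∑ s, p₀ s * val P r πstar H 1 s) - (∑ s, p₀ s * val P r' πpes H 1 s)
      ≤ ∑ h ∈ Finset.Icc 1 H, ∑ s,
          occ P πstar p₀ (h - 1) s *
            (r h s (πstar h s) - r' h s (πstar h s)) := by
  constructor
  · apply sub_le_sub_left
    exact Finset.sum_le_sum fun s _ =>
      mul_le_mul_of_nonneg_left (val_mono P hP0 r r' hr πpes H 1 s) (hp₀ s)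
  · have h1 : (∑ s, p₀ s * val P r' πstar H 1 s) ≤ ∑ s, p₀ s * val P r' πpes H 1 s :=
      Finset.sum_le_sum fun s _ =>
        mul_le_mul_of_nonneg_left (hopt' πstar H 1 s) (hp₀ s)
    have key : (∑ s, p₀ s * val P r πstar H 1 s) - (∑ s, p₀ s * val P r' πstar H 1 s)
        = ∑ h ∈ Finset.Icc 1 H, ∑ s,
            occ P πstar p₀ (h - 1) s * (r h s (πstar h s) - r' h s (πstar h s)) := by
      have e1 := val_occ P r πstar p₀ H 0
      have e2 := val_occ P r' πstar p₀ H 0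
      simp only [zero_add, Nat.zero_add] at e1 e2
      have hp : ∀ s, occ P πstar p₀ 0 s = p₀ s := fun s => rfl
      simp only [hp] at e1 e2
      rw [e1, e2, ← Finset.sum_sub_distrib]
      refine Finset.sum_congr rfl fun h _ => ?_
      rw [← Finset.sum_sub_distrib]
      exact Finset.sum_congr rfl fun s _ => (mul_sub _ _ _).symm
    linarith
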